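/- Let d = 2 and m ≥ 1. Let q ∈ ℝ^m have positive integer entries, n = q_1 + ⋯ + q_m, and let Q̃ ∈ ℝ^{n×n} be the block-diagonal matrix with blocks q_i·I_{q_i}. Given X ∈ ℝ^{2×m} with unit-norm columns, let X̃ ∈ ℝ^{2×n} repeat column x_i exactly q_i times. Define M ∈ ℝ^{m×m} by m_ij = q_i q_j h(x_iᵀx_j) with h(t) = tφ'(t) − (1−t²)φ''(t), D = diag(M1_m), and define M̃ ∈ ℝ^{n×n} by m̃_kl = h(x̃_kᵀx̃_l). If X is critical for f_m(X) = (1/2)⟨qqᵀ, φ(XᵀX)⟩, then X̃ is critical for f_n(X̃) = (1/2)⟨1_n 1_nᵀ, φ(X̃ᵀX̃)⟩, and the eigenvalues of Q̃^{1/2} L(M̃) Q̃^{1/2} (with multiplicity) consist of: the m eigenvalues of L(M), together with, for each i = 1,…,m, the value d_ii with multiplicity q_i − 1. -/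

import Mathlib

open Matrix

noncomputable section

/-- Frobenius inner product `⟨A,B⟩ = ∑ᵢⱼ Aᵢⱼ Bᵢⱼ`. -/
def frob {ι κ : Type*} [Fintype ι] [Fintype κ] (A B : Matrix ι κ ℝ) : ℝ :=
  ∑ i, ∑ j, A i j * B i j

/-- `ddiag` zeroes out all off-diagonal entries of a square matrix. -/
def ddiag {ι : Type*} [Fintype ι] [DecidableEq ι] (M : Matrix ι ι ℝ) : Matrix ι ι ℝ :=
  Matrix.diagonal fun i => M i i

/-- Graph Laplacian `L(M) = diag(M 1) − M`. -/
def lap {ι : Type*} [Fintype ι] [DecidableEq ι] (M : Matrix ι ι ℝ) : Matrix ι ι ℝ :=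
  Matrix.diagonal (fun i => ∑ j, M i j) - M

/-- `X` has unit-norm columns. -/
def unitCols {d : ℕ} {ι : Type*} [Fintype ι] (X : Matrix (Fin d) ι ℝ) : Prop :=
  ∀ j, ∑ i, X i j ^ 2 = 1

/-- `A = W ⊙ φ'(XᵀX)` (`d1` playing the role of `φ'`). -/
def Amat {d : ℕ} {ι : Type*} [Fintype ι] (W : Matrix ι ι ℝ) (X : Matrix (Fin d) ι ℝ)
    (d1 : ℝ → ℝ) : Matrix ι ι ℝ :=
  Matrix.hadamard W ((Xᵀ * X).map d1)

/-- `S = ddiag(XᵀXA) − A`. -/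
def Smat {d : ℕ} {ι : Type*} [Fintype ι] [DecidableEq ι] (W : Matrix ι ι ℝ)
    (X : Matrix (Fin d) ι ℝ) (d1 : ℝ → ℝ) : Matrix ι ι ℝ :=
  ddiag ((Xᵀ * X) * Amat W X d1) - Amat W X d1

/-- First-order criticality: `X S = 0`, i.e. `X·ddiag(XᵀXA) = XA`
(vanishing Riemannian gradient on the product of spheres). -/
def IsCritical {d : ℕ} {ι : Type*} [Fintype ι] [DecidableEq ι] (W : Matrix ι ι ℝ)
    (X : Matrix (Fin d) ι ℝ) (d1 : ℝ → ℝ) : Prop :=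
  X * Smat W X d1 = 0

/-- The Riemannian Hessian quadratic form of `f` at `X` is negative semidefinite:
`−⟨ẊᵀẊ, S⟩ + (1/2)⟨(XᵀẊ + ẊᵀX)^{⊙2}, W ⊙ φ''(XᵀX)⟩ ≤ 0` for all tangent `Ẋ`. -/
def HessNegSemidef {d : ℕ} {ι : Type*} [Fintype ι] [DecidableEq ι] (W : Matrix ι ι ℝ)
    (X : Matrix (Fin d) ι ℝ) (d1 d2 : ℝ → ℝ) : Prop :=
  ∀ V : Matrix (Fin d) ι ℝ, (∀ j, (Xᵀ * V) j j = 0) →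
    -(frob (Vᵀ * V) (Smat W X d1))
      + (1 / 2) * frob ((Xᵀ * V + Vᵀ * X).map fun t => t ^ 2)
          (Matrix.hadamard W ((Xᵀ * X).map d2)) ≤ 0

/-- The graph with an edge `{i,j}` whenever `w_ij > 0` is connected. -/
def ConnectedW {ι : Type*} (W : Matrix ι ι ℝ) : Prop :=
  (SimpleGraph.fromRel fun i j => 0 < W i j).Connected

/-- `f(Y) = (1/2)⟨W, φ(YᵀY)⟩`. -/
def fval {d : ℕ} {ι : Type*} [Fintype ι] (W : Matrix ι ι ℝ) (φ : ℝ → ℝ)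
    (Y : Matrix (Fin d) ι ℝ) : ℝ :=
  (1 / 2) * frob W ((Yᵀ * Y).map φ)

/-- `h(t) = tφ'(t) − (1−t²)φ''(t)`. -/
def hfun (d1 d2 : ℝ → ℝ) (t : ℝ) : ℝ := t * d1 t - (1 - t ^ 2) * d2 t

/-- The matrix `M` with `m_ij = w_ij · h(x_iᵀx_j)`. -/
def Mmat {d : ℕ} {ι : Type*} [Fintype ι] (W : Matrix ι ι ℝ) (X : Matrix (Fin d) ι ℝ)
    (d1 d2 : ℝ → ℝ) : Matrix ι ι ℝ :=
  Matrix.of fun i j => W i j * hfun d1 d2 ((Xᵀ * X) i j)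

/-- The kernel of `L` is exactly `span(1)`. -/
def KernelIsConst {ι : Type*} [Fintype ι] [DecidableEq ι] (L : Matrix ι ι ℝ) : Prop :=
  ∀ α : ι → ℝ, L.mulVec α = 0 ↔ ∃ c : ℝ, ∀ k, α k = c

/-- The regular `n`-gon configuration on the unit circle. -/
def ngon (n : ℕ) : Matrix (Fin 2) (Fin n) ℝ :=
  Matrix.of fun a j =>
    if a = 0 then Real.cos (2 * Real.pi * (j : ℝ) / (n : ℝ))
    else Real.sin (2 * Real.pi * (j : ℝ) / (n : ℝ))

/-- The log-sum-exp smoothing `φ_{ε,τ}(t) = ε·log(1 + e^{(t−τ)/ε})` of the ReLU. -/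
def philse (ε τ : ℝ) : ℝ → ℝ := fun t => ε * Real.log (1 + Real.exp ((t - τ) / ε))


open Matrix Polynomial

noncomputable section

lemma charpoly_similar {n : Type*} [Fintype n] [DecidableEq n]
    (B P Q T : Matrix n n ℝ) (hPQ : P * Q = 1) (hBP : B * P = P * T) :
    B.charpoly = T.charpoly := by
  have hB : B = P * T * Q := by
    calc B = B * (P * Q) := by rw [hPQ, mul_one]
    _ = (B * P) * Q := by rw [mul_assoc]
    _ = P * T * Q := by rw [hBP]
  have hmapPQ : (P.map (C : ℝ → ℝ[X])) * (Q.map C) = 1 := by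
    have := congrArg (fun (M : Matrix n n ℝ) => M.map (C : ℝ → ℝ[X])) hPQ
    simpa [Matrix.map_mul, Matrix.map_one (C : ℝ →+* ℝ[X]) (map_zero _) (map_one _)] using this
  have hcm : charmatrix B = (P.map (C : ℝ → ℝ[X])) * charmatrix T * (Q.map C) := by
    rw [charmatrix, charmatrix, hB]
    rw [mul_sub, sub_mul]
    congr 1
    · simp only [Matrix.scalar_apply, ← Matrix.smul_one_eq_diagonal]
      rw [mul_smul_comm, smul_mul_assoc, mul_one, hmapPQ]
    · simp [RingHom.mapMatrix_apply, Matrix.map_mul]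
  have h1 : (P.map (C : ℝ → ℝ[X])).det * (Q.map C).det = 1 := by
    rw [← det_mul, hmapPQ, det_one]
  rw [Matrix.charpoly, Matrix.charpoly, hcm, det_mul, det_mul,
    mul_comm (P.map (C : ℝ → ℝ[X])).det, mul_assoc, h1, mul_one]

lemma charpoly_diagonal {n : Type*} [Fintype n] [DecidableEq n] (f : n → ℝ) :
    (Matrix.diagonal f).charpoly = ∏ i, (X - Polynomial.C (f i)) := by
  have : charmatrix (Matrix.diagonal f) = Matrix.diagonal fun i => X - Polynomial.C (f i) := by
    ext i j
    by_cases h : i = j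
    · subst h; simp
    · simp [h, charmatrix_apply, Matrix.diagonal_apply_ne _ h]
  rw [Matrix.charpoly, this, det_diagonal]
open Matrix Polynomial

lemma crit_entry {d : ℕ} {ι : Type*} [Fintype ι] [DecidableEq ι] (W : Matrix ι ι ℝ)
    (Y : Matrix (Fin d) ι ℝ) (d1 : ℝ → ℝ) (a : Fin d) (j : ι) :
    (Y * Smat W Y d1) a j
      = Y a j * (∑ i, (Yᵀ * Y) j i * (W i j * d1 ((Yᵀ * Y) i j)))
        - ∑ i, Y a i * (W i j * d1 ((Yᵀ * Y) i j)) := by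
  rw [Matrix.mul_apply]
  simp only [Smat, ddiag, Amat, Matrix.sub_apply, Matrix.diagonal_apply,
    Matrix.hadamard_apply, Matrix.map_apply, Matrix.of_apply, mul_sub,
    Finset.sum_sub_distrib, mul_ite, mul_zero, Finset.sum_ite_eq', Finset.mem_univ, if_true]
  simp only [Matrix.mul_apply, Matrix.hadamard_apply, Matrix.map_apply]

theorem part1
    {m : ℕ}
    (d1 : ℝ → ℝ)
    (q : Fin m → ℕ) (hq : ∀ i, 1 ≤ q i)
    (X : Matrix (Fin 2) (Fin m) ℝ)
    (hcrit : IsCritical (Matrix.of fun i j => (q i : ℝ) * (q j : ℝ)) X d1) :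
    IsCritical (Matrix.of fun _ _ => (1 : ℝ))
      (Matrix.of fun a (k : (i : Fin m) × Fin (q i)) => X a k.1) d1 := by
  have key : ∀ (a : Fin 2) (j : Fin m),
      X a j * (∑ i, (Xᵀ*X) j i * (((q i : ℝ) * (q j : ℝ)) * d1 ((Xᵀ*X) i j)))
        - ∑ i, X a i * (((q i : ℝ) * (q j : ℝ)) * d1 ((Xᵀ*X) i j)) = 0 := by
    intro a j
    have h0 : (X * Smat (Matrix.of fun i j => (q i : ℝ) * (q j : ℝ)) X d1) a j = 0 := by
      rw [hcrit]; rfl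
    rw [crit_entry] at h0
    simpa using h0
  ext a l
  rw [Matrix.zero_apply, crit_entry]
  have hGt : ∀ k l : (i : Fin m) × Fin (q i),
      ((Matrix.of fun a (k : (i : Fin m) × Fin (q i)) => X a k.1)ᵀ
        * (Matrix.of fun a (k : (i : Fin m) × Fin (q i)) => X a k.1)) k l
        = (Xᵀ * X) k.1 l.1 := by
    intro k l; simp [Matrix.mul_apply]
  simp only [hGt, Matrix.of_apply, one_mul]
  rw [← Finset.univ_sigma_univ, Finset.sum_sigma, Finset.sum_sigma]
  simp only [Finset.sum_const, Finset.card_univ, Fintype.card_fin, nsmul_eq_mul]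
  have hql : (0:ℝ) < (q l.1 : ℝ) := by exact_mod_cast hq l.1
  apply mul_left_cancel₀ (ne_of_gt hql)
  rw [mul_zero]
  calc (q l.1 : ℝ) * (X a l.1 * (∑ j, (q j : ℝ) * ((Xᵀ*X) l.1 j * d1 ((Xᵀ*X) j l.1)))
        - ∑ j, (q j : ℝ) * (X a j * d1 ((Xᵀ*X) j l.1)))
      = X a l.1 * (∑ i, (Xᵀ*X) l.1 i * (((q i : ℝ) * (q l.1 : ℝ)) * d1 ((Xᵀ*X) i l.1)))
        - ∑ i, X a i * (((q i : ℝ) * (q l.1 : ℝ)) * d1 ((Xᵀ*X) i l.1)) := by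
        rw [mul_sub]
        congr 1
        · rw [mul_left_comm]
          congr 1
          rw [Finset.mul_sum]
          apply Finset.sum_congr rfl; intro i _; ring
        · rw [Finset.mul_sum]
          apply Finset.sum_congr rfl; intro i _; ring
    _ = 0 := key a l.1

section Part2

variable {m : ℕ} (q : Fin m → ℕ)

/-- embedding of `Fin (q i - 1)` into nonzero elements of `Fin (q i)` -/
def embF (i : Fin m) (a : Fin (q i - 1)) : Fin (q i) := ⟨a.1 + 1, by omega⟩

lemma sum_emb (n : ℕ) (c : Fin n) :
    (∑ a : Fin (n-1), (if c = ⟨a.1+1, by omega⟩ then (1:ℝ) else 0))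
      = if c.1 = 0 then 0 else 1 := by
  by_cases hc : c.1 = 0
  · rw [if_pos hc]
    apply Finset.sum_eq_zero
    intro a _
    rw [if_neg]
    intro h
    rw [Fin.ext_iff] at h
    simp at h
    omega
  · rw [if_neg hc]
    have hlt : c.1 - 1 < n - 1 := by have := c.2; omega
    have hterm : ∀ a : Fin (n-1), (if c = ⟨a.1+1, by omega⟩ then (1:ℝ) else 0)
        = (if a = ⟨c.1-1, hlt⟩ then 1 else 0) := by
      intro a
      have h : (c = (⟨a.1+1, by omega⟩ : Fin n)) ↔ (a = ⟨c.1-1, hlt⟩) := by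
        rw [Fin.ext_iff, Fin.ext_iff]
        simp only []
        constructor <;> (intro h; omega)
      exact if_congr h rfl rfl
    rw [Finset.sum_congr rfl fun a _ => hterm a]
    simp

lemma sum_emb_mul (n : ℕ) (c c' : Fin n) :
    (∑ a : Fin (n-1), (if c = ⟨a.1+1, by omega⟩ then (1:ℝ) else 0)
      * (if c' = ⟨a.1+1, by omega⟩ then (1:ℝ) else 0))
      = if c = c' ∧ c.1 ≠ 0 then 1 else 0 := by
  by_cases hcc : c = c'
  · subst hcc
    have hterm : ∀ a : Fin (n-1), (if c = ⟨a.1+1, by omega⟩ then (1:ℝ) else 0)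
        * (if c = ⟨a.1+1, by omega⟩ then (1:ℝ) else 0)
        = (if c = ⟨a.1+1, by omega⟩ then (1:ℝ) else 0) := by
      intro a; split_ifs <;> ring
    rw [Finset.sum_congr rfl fun a _ => hterm a, sum_emb]
    by_cases hc : c.1 = 0 <;> simp [hc]
  · rw [if_neg (by tauto)]
    apply Finset.sum_eq_zero
    intro a _
    split_ifs with h1 h2
    · exact absurd (h1.trans h2.symm) hcc
    all_goals ring

lemma sum_embF (i : Fin m) (c : Fin (q i)) :
    (∑ a : Fin (q i - 1), (if c = embF q i a then (1:ℝ) else 0))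
      = if c.1 = 0 then 0 else 1 := sum_emb (q i) c

lemma sum_embF_mul (i : Fin m) (c c' : Fin (q i)) :
    (∑ a : Fin (q i - 1), (if c = embF q i a then (1:ℝ) else 0)
      * (if c' = embF q i a then (1:ℝ) else 0))
      = if c = c' ∧ c.1 ≠ 0 then 1 else 0 := sum_emb_mul (q i) c c'

end Part2

theorem part2 {m : ℕ} (d1 d2 : ℝ → ℝ) (q : Fin m → ℕ) (hq : ∀ i, 1 ≤ q i)
    (X : Matrix (Fin 2) (Fin m) ℝ) :
    (Matrix.diagonal (fun k : (i : Fin m) × Fin (q i) => Real.sqrt (q k.1)) *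
        lap (Mmat (Matrix.of fun _ _ => (1 : ℝ))
          (Matrix.of fun a (k : (i : Fin m) × Fin (q i)) => X a k.1) d1 d2) *
        Matrix.diagonal (fun k : (i : Fin m) × Fin (q i) => Real.sqrt (q k.1))).charpoly
      = (lap (Mmat (Matrix.of fun i j => (q i : ℝ) * (q j : ℝ)) X d1 d2)).charpoly *
        ∏ i : Fin m,
          (Polynomial.X - Polynomial.C
            (∑ j, Mmat (Matrix.of fun i' j' => (q i' : ℝ) * (q j' : ℝ)) X d1 d2 i j))
            ^ (q i - 1) := by
  have hq0 : ∀ i, (0:ℝ) < (q i : ℝ) := fun i => by exact_mod_cast hq i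
  have hsq : ∀ i, Real.sqrt (q i) * Real.sqrt (q i) = (q i : ℝ) :=
    fun i => Real.mul_self_sqrt (le_of_lt (hq0 i))
  have hsne : ∀ i, Real.sqrt (q i) ≠ 0 := fun i => by
    intro h; have := hsq i; rw [h, mul_zero] at this; exact absurd this.symm (ne_of_gt (hq0 i))
  have hdiv : ∀ i, (Real.sqrt (q i))⁻¹ * (q i : ℝ) = Real.sqrt (q i) := fun i => by
    have h2 : (Real.sqrt (q i))⁻¹ * ((Real.sqrt (q i)) * (Real.sqrt (q i)))
        = Real.sqrt (q i) := by rw [← mul_assoc, inv_mul_cancel₀ (hsne i), one_mul]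
    rw [hsq i] at h2
    exact h2
  -- abbreviations
  set B := (Matrix.diagonal (fun k : (i : Fin m) × Fin (q i) => Real.sqrt (q k.1)) *
        lap (Mmat (Matrix.of fun _ _ => (1 : ℝ))
          (Matrix.of fun a (k : (i : Fin m) × Fin (q i)) => X a k.1) d1 d2) *
        Matrix.diagonal (fun k : (i : Fin m) × Fin (q i) => Real.sqrt (q k.1))) with hB
  set LM := lap (Mmat (Matrix.of fun i j => (q i : ℝ) * (q j : ℝ)) X d1 d2) with hLM
  let h : Fin m → Fin m → ℝ := fun i j => hfun d1 d2 ((Xᵀ * X) i j)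
  let d : Fin m → ℝ := fun i => ∑ j, (q i : ℝ) * (q j : ℝ) * h i j
  have hMapp : ∀ i j, Mmat (Matrix.of fun i' j' => (q i' : ℝ) * (q j' : ℝ)) X d1 d2 i j
      = (q i : ℝ) * (q j : ℝ) * h i j := fun i j => rfl
  have hdapp : ∀ i, (∑ j, Mmat (Matrix.of fun i' j' => (q i' : ℝ) * (q j' : ℝ)) X d1 d2 i j)
      = d i := fun i => rfl
  have hLMent : ∀ i j, LM i j = (if i = j then d i else 0) - (q i : ℝ) * (q j : ℝ) * h i j := by
    intro i j
    rw [hLM, lap, Matrix.sub_apply, Matrix.diagonal_apply, hMapp]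
    by_cases hij : i = j
    · rw [if_pos hij, if_pos hij, hdapp]
    · rw [if_neg hij, if_neg hij]
  have hMt : ∀ k l : (i : Fin m) × Fin (q i),
      Mmat (Matrix.of fun _ _ => (1:ℝ))
        (Matrix.of fun a (k : (i : Fin m) × Fin (q i)) => X a k.1) d1 d2 k l
      = h k.1 l.1 := by
    intro k l
    show (1:ℝ) * hfun d1 d2 _ = _
    rw [one_mul]
    congr 1
    try simp [Matrix.mul_apply]
  have sumSigma : ∀ f : Fin m → ℝ,
      (∑ k : (i : Fin m) × Fin (q i), f k.1) = ∑ j, (q j : ℝ) * f j := by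
    intro f
    rw [← Finset.univ_sigma_univ, Finset.sum_sigma]
    simp [Finset.sum_const, Finset.card_univ, nsmul_eq_mul]
  have hBent : ∀ k l : (i : Fin m) × Fin (q i),
      B k l = (if k = l then d k.1 else 0)
        - Real.sqrt (q k.1) * Real.sqrt (q l.1) * h k.1 l.1 := by
    intro k l
    rw [hB, Matrix.mul_diagonal, Matrix.diagonal_mul, lap, Matrix.sub_apply,
      Matrix.diagonal_apply]
    rw [Finset.sum_congr rfl fun l' _ => hMt k l', hMt, sumSigma (fun j => h k.1 j)]
    by_cases hkl : k = l
    · subst hkl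
      rw [if_pos rfl, if_pos rfl]
      have : d k.1 = (q k.1 : ℝ) * ∑ j, (q j : ℝ) * h k.1 j := by
        show (∑ j, (q k.1 : ℝ) * (q j : ℝ) * h k.1 j) = _
        rw [Finset.mul_sum]
        exact Finset.sum_congr rfl fun j _ => by ring
      rw [this]
      have h2 : Real.sqrt (q k.1) * ((∑ j, (q j:ℝ) * h k.1 j) - h k.1 k.1) * Real.sqrt (q k.1)
          = (Real.sqrt (q k.1) * Real.sqrt (q k.1))
            * ((∑ j, (q j:ℝ) * h k.1 j) - h k.1 k.1) := by ring
      rw [h2, hsq]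
      ring
    · rw [if_neg hkl, if_neg hkl]
      ring
  -- the similarity data
  let z : (i : Fin m) → Fin (q i) := fun i => ⟨0, hq i⟩
  let P : Matrix ((i : Fin m) × Fin (q i)) (Fin m ⊕ ((i : Fin m) × Fin (q i - 1))) ℝ :=
    Matrix.of fun k s =>
      Sum.elim (fun i => if k.1 = i then (Real.sqrt (q i))⁻¹ else 0)
        (fun p => (if k = ⟨p.1, embF q p.1 p.2⟩ then (1:ℝ) else 0)
          - (if k = ⟨p.1, z p.1⟩ then 1 else 0)) s
  let Sm : Matrix (Fin m ⊕ ((i : Fin m) × Fin (q i - 1))) ((i : Fin m) × Fin (q i)) ℝ :=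
    Matrix.of fun s k =>
      Sum.elim (fun i => if k.1 = i then (Real.sqrt (q i))⁻¹ else 0)
        (fun p => (if k = ⟨p.1, embF q p.1 p.2⟩ then (1:ℝ) else 0)
          - (if k.1 = p.1 then ((q p.1 : ℝ))⁻¹ else 0)) s
  let T : Matrix (Fin m ⊕ ((i : Fin m) × Fin (q i - 1)))
      (Fin m ⊕ ((i : Fin m) × Fin (q i - 1))) ℝ :=
    Matrix.fromBlocks LM 0 0 (Matrix.diagonal fun p : (i : Fin m) × Fin (q i - 1) => d p.1)
  have hSml : ∀ (i : Fin m) (k : (i : Fin m) × Fin (q i)),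
      Sm (Sum.inl i) k = if k.1 = i then (Real.sqrt (q i))⁻¹ else 0 := fun _ _ => rfl
  have hSmr : ∀ (p : (i : Fin m) × Fin (q i - 1)) (k : (i : Fin m) × Fin (q i)),
      Sm (Sum.inr p) k = (if k = ⟨p.1, embF q p.1 p.2⟩ then (1:ℝ) else 0)
        - (if k.1 = p.1 then ((q p.1 : ℝ))⁻¹ else 0) := fun _ _ => rfl
  have hPl0 : ∀ (k : (i : Fin m) × Fin (q i)) i,
      P k (Sum.inl i) = if k.1 = i then (Real.sqrt (q i))⁻¹ else 0 := fun _ _ => rfl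
  have hPr0 : ∀ (k : (i : Fin m) × Fin (q i)) (p : (i : Fin m) × Fin (q i - 1)),
      P k (Sum.inr p) = (if k = ⟨p.1, embF q p.1 p.2⟩ then (1:ℝ) else 0)
        - (if k = ⟨p.1, z p.1⟩ then 1 else 0) := fun _ _ => rfl
  have hPS : P * Sm = 1 := by
    ext k l
    obtain ⟨ki, kc⟩ := k
    obtain ⟨li, lc⟩ := l
    rw [Matrix.mul_apply, Fintype.sum_sum_type]
    simp only [hSml, hSmr, hPl0, hPr0]
    rw [← Finset.univ_sigma_univ, Finset.sum_sigma]
    dsimp only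
    rw [Finset.sum_eq_single ki (fun b _ hb => by
      rw [if_neg (fun hh => hb hh.symm), zero_mul]) (fun hk => absurd (Finset.mem_univ ki) hk)]
    rw [if_pos rfl]
    by_cases hli : li = ki
    · subst hli
      rw [if_pos rfl]
      rw [Finset.sum_eq_single li (fun b _ hb => Finset.sum_eq_zero (fun a _ => by
        rw [if_neg (fun hh => hb (congrArg Sigma.fst hh).symm),
          if_neg (fun hh => hb (congrArg Sigma.fst hh).symm), sub_self, zero_mul]))
        (fun hk => absurd (Finset.mem_univ li) hk)]
      rw [Matrix.one_apply]
      simp only [Sigma.mk.inj_iff, heq_eq_eq, true_and, eq_self_iff_true, if_true]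
      have hrr : (Real.sqrt (q li))⁻¹ * (Real.sqrt (q li))⁻¹ = ((q li : ℝ))⁻¹ := by
        rw [← mul_inv, hsq]
      rw [hrr]
      simp only [sub_mul, mul_sub, Finset.sum_sub_distrib]
      rw [sum_embF_mul q li kc lc]
      rw [show (∑ a : Fin (q li - 1), (if kc = embF q li a then (1:ℝ) else 0) * ((q li:ℝ))⁻¹)
          = (∑ a : Fin (q li - 1), (if kc = embF q li a then (1:ℝ) else 0)) * ((q li:ℝ))⁻¹
        from (Finset.sum_mul _ _ _).symm]
      rw [sum_embF q li kc]
      rw [show (∑ a : Fin (q li - 1), (if kc = z li then (1:ℝ) else 0)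
            * (if lc = embF q li a then (1:ℝ) else 0))
          = (if kc = z li then (1:ℝ) else 0)
            * (∑ a : Fin (q li - 1), (if lc = embF q li a then (1:ℝ) else 0))
        from (Finset.mul_sum _ _ _).symm]
      rw [sum_embF q li lc]
      rw [show (∑ _a : Fin (q li - 1), (if kc = z li then (1:ℝ) else 0) * ((q li:ℝ))⁻¹)
          = ((q li - 1 : ℕ) : ℝ) * ((if kc = z li then (1:ℝ) else 0) * ((q li:ℝ))⁻¹) from by
        rw [Finset.sum_const, Finset.card_univ, Fintype.card_fin, nsmul_eq_mul]]
      have hcast : ((q li - 1 : ℕ) : ℝ) = (q li : ℝ) - 1 := by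
        rw [Nat.cast_sub (hq li)]; norm_num
      rw [hcast]
      have hz0 : (kc = z li) ↔ (kc.1 = 0) := by rw [Fin.ext_iff]
      have hqne : ((q li : ℝ)) ≠ 0 := ne_of_gt (hq0 li)
      by_cases hkz : kc.1 = 0 <;> by_cases hlz : lc.1 = 0
      · have hkl : kc = lc := by rw [Fin.ext_iff, hkz, hlz]
        rw [if_pos (hz0.mpr hkz), if_pos hkz, if_pos hlz, if_pos hkl,
          if_neg (fun hcon => hcon.2 hkz)]
        try field_simp
        try ring
      · have hkl : kc ≠ lc := fun hcon => hlz (by rw [← hcon]; exact hkz)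
        rw [if_pos (hz0.mpr hkz), if_pos hkz, if_neg hlz, if_neg hkl,
          if_neg (fun hcon => hkl hcon.1)]
        try field_simp
        try ring
      · have hkl : kc ≠ lc := fun hcon => hkz (by rw [hcon]; exact hlz)
        rw [if_neg (fun hcon => hkz (hz0.mp hcon)), if_neg hkz, if_pos hlz, if_neg hkl,
          if_neg (fun hcon => hkl hcon.1)]
        try field_simp
        try ring
      · by_cases hkl : kc = lc
        · rw [if_neg (fun hcon => hkz (hz0.mp hcon)), if_neg hkz, if_neg hlz, if_pos hkl,
            if_pos ⟨hkl, hkz⟩]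
          ring
        · rw [if_neg (fun hcon => hkz (hz0.mp hcon)), if_neg hkz, if_neg hlz, if_neg hkl,
            if_neg (fun hcon => hkl hcon.1)]
          ring
    · rw [if_neg hli]
      rw [Finset.sum_eq_zero (fun x _ => Finset.sum_eq_zero (fun a _ => by
        by_cases hx : x = ki
        · subst hx
          apply mul_eq_zero_of_right
          rw [if_neg (fun hh => hli (congrArg Sigma.fst hh)),
            if_neg (fun hh : li = x => hli hh), sub_self]
        · apply mul_eq_zero_of_left
          rw [if_neg (fun hh => hx (congrArg Sigma.fst hh).symm),
            if_neg (fun hh => hx (congrArg Sigma.fst hh).symm), sub_self]))]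
      rw [Matrix.one_apply, if_neg (fun hh => hli (congrArg Sigma.fst hh).symm)]
      rw [mul_zero, add_zero]
  have hPl : ∀ (k : (i : Fin m) × Fin (q i)) i,
      P k (Sum.inl i) = if k.1 = i then (Real.sqrt (q i))⁻¹ else 0 := fun _ _ => rfl
  have hPr : ∀ (k : (i : Fin m) × Fin (q i)) (p : (i : Fin m) × Fin (q i - 1)),
      P k (Sum.inr p) = (if k = ⟨p.1, embF q p.1 p.2⟩ then (1:ℝ) else 0)
        - (if k = ⟨p.1, z p.1⟩ then 1 else 0) := fun _ _ => rfl
  have hne : ∀ (i : Fin m) (a : Fin (q i - 1)),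
      (⟨i, embF q i a⟩ : (i : Fin m) × Fin (q i)) ≠ ⟨i, z i⟩ := by
    intro i a hcon
    have := congrArg (fun p : (i : Fin m) × Fin (q i) => (p.2 : Fin (q p.1)).1) hcon
    simp [embF, z] at this
  have hBP : B * P = P * T := by
    ext k s
    rw [Matrix.mul_apply, Matrix.mul_apply, Fintype.sum_sum_type]
    cases s with
    | inl i =>
      have hT11 : ∀ j, T (Sum.inl j) (Sum.inl i) = LM j i := fun j => rfl
      have hT21 : ∀ p : (i : Fin m) × Fin (q i - 1), T (Sum.inr p) (Sum.inl i) = 0 :=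
        fun p => rfl
      simp only [hT11, hT21, hPl, hPr, mul_zero, Finset.sum_const_zero, add_zero]
      -- RHS single sum
      rw [Finset.sum_eq_single k.1 (fun b _ hb => by
        rw [if_neg (fun hh => hb hh.symm), zero_mul]) (fun hk => absurd (Finset.mem_univ k.1) hk)]
      rw [if_pos rfl]
      -- LHS
      simp only [hBent, sub_mul, Finset.sum_sub_distrib]
      rw [Finset.sum_eq_single k (fun b _ hb => by
        rw [if_neg (fun hh => hb hh.symm), zero_mul]) (fun hk => absurd (Finset.mem_univ k) hk)]
      rw [if_pos rfl]
      rw [show (∑ l : (i : Fin m) × Fin (q i),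
            Real.sqrt (q k.1) * Real.sqrt (q l.1) * h k.1 l.1
              * if l.1 = i then (Real.sqrt (q i))⁻¹ else 0)
          = ∑ j : Fin m, (q j : ℝ) * (Real.sqrt (q k.1) * Real.sqrt (q j) * h k.1 j
              * if j = i then (Real.sqrt (q i))⁻¹ else 0)
        from sumSigma (fun j => Real.sqrt (q k.1) * Real.sqrt (q j) * h k.1 j
          * if j = i then (Real.sqrt (q i))⁻¹ else 0)]
      rw [Finset.sum_eq_single i (fun b _ hb => by rw [if_neg hb, mul_zero, mul_zero])
        (fun hk => absurd (Finset.mem_univ i) hk), if_pos rfl, hLMent]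
      by_cases hki : k.1 = i
      · rw [if_pos hki, if_pos hki, hki]
        have scalar : ∀ (A H S Qr : ℝ), S ≠ 0 → S * S = Qr →
            A * S⁻¹ - Qr * (S * S * H * S⁻¹) = S⁻¹ * (A - Qr * Qr * H) := by
          intro A H S Qr hS hQ
          subst hQ
          field_simp
        exact scalar _ _ _ _ (hsne i) (hsq i)
      · rw [if_neg hki, if_neg hki]
        have eL : (q i:ℝ) * (Real.sqrt (q k.1) * Real.sqrt (q i) * h k.1 i
              * (Real.sqrt (q i))⁻¹)
            = (Real.sqrt (q i) * (Real.sqrt (q i))⁻¹)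
              * ((q i:ℝ) * Real.sqrt (q k.1) * h k.1 i) := by ring
        have eR : (Real.sqrt (q k.1))⁻¹ * ((q k.1:ℝ) * (q i:ℝ) * h k.1 i)
            = ((Real.sqrt (q k.1))⁻¹ * (q k.1:ℝ)) * ((q i:ℝ) * h k.1 i) := by ring
        rw [mul_zero, zero_sub, zero_sub, mul_neg, neg_inj, eL, eR,
          mul_inv_cancel₀ (hsne i), hdiv, one_mul]
        ring
    | inr p =>
      obtain ⟨i, a⟩ := p
      have hT12 : ∀ j, T (Sum.inl j) (Sum.inr (⟨i, a⟩ : (i : Fin m) × Fin (q i - 1))) = 0 :=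
        fun j => rfl
      have hT22 : ∀ p' : (i : Fin m) × Fin (q i - 1),
          T (Sum.inr p') (Sum.inr (⟨i, a⟩ : (i : Fin m) × Fin (q i - 1)))
            = if p' = ⟨i, a⟩ then d p'.1 else 0 := fun p' => rfl
      simp only [hT12, hT22, hPl, hPr, mul_zero, Finset.sum_const_zero, zero_add, mul_sub,
        mul_ite, mul_one, Finset.sum_sub_distrib, Finset.sum_ite_eq', Finset.mem_univ, if_true]
      rw [hBent, hBent]
      dsimp only
      split_ifs with h1 h2 h3
      · exact absurd (h1.symm.trans h2) (fun hc => hne i a hc)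
      · subst h1; dsimp only; ring
      · subst h3; dsimp only; ring
      · ring
  -- assembling
  have cardEq : Fintype.card ((i : Fin m) × Fin (q i))
      = Fintype.card (Fin m ⊕ ((i : Fin m) × Fin (q i - 1))) := by
    simp only [Fintype.card_sigma, Fintype.card_sum, Fintype.card_fin]
    have : ∀ i : Fin m, q i = 1 + (q i - 1) := fun i => by have := hq i; omega
    calc (∑ i, q i) = ∑ i : Fin m, (1 + (q i - 1)) :=
          Finset.sum_congr rfl fun i _ => this i
    _ = (∑ _i : Fin m, 1) + ∑ i, (q i - 1) := Finset.sum_add_distrib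
    _ = Fintype.card (Fin m) + ∑ i, (q i - 1) := by
          rw [Finset.sum_const, smul_eq_mul, mul_one, Finset.card_univ]
    _ = m + ∑ i, (q i - 1) := by rw [Fintype.card_fin]
  let e : ((i : Fin m) × Fin (q i)) ≃ (Fin m ⊕ ((i : Fin m) × Fin (q i - 1))) :=
    Fintype.equivOfCardEq cardEq
  have hPS' : (P.submatrix id e) * (Sm.submatrix e id) = 1 := by
    ext k l
    have h1 : (P * Sm) k l = (1 : Matrix _ _ ℝ) k l := by rw [hPS]
    rw [Matrix.mul_apply] at h1
    rw [Matrix.mul_apply]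
    calc (∑ x, P.submatrix id e k x * Sm.submatrix e id x l)
        = ∑ s, P k s * Sm s l := Fintype.sum_equiv e _ _ (fun x => rfl)
      _ = (1 : Matrix _ _ ℝ) k l := h1
  have hBP' : B * (P.submatrix id e) = (P.submatrix id e) * (T.submatrix e e) := by
    ext k x
    have h1 : (B * P) k (e x) = (P * T) k (e x) := by rw [hBP]
    rw [Matrix.mul_apply, Matrix.mul_apply] at h1
    rw [Matrix.mul_apply, Matrix.mul_apply]
    calc (∑ l, B k l * P.submatrix id e l x) = ∑ s, P k s * T s (e x) := h1
      _ = ∑ y, P.submatrix id e k y * T.submatrix e e y x :=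
          (Fintype.sum_equiv e _ _ fun y => rfl).symm
  have hchar : B.charpoly = (T.submatrix e e).charpoly :=
    charpoly_similar _ _ _ _ hPS' hBP'
  have hchar2 : (T.submatrix e e).charpoly = T.charpoly := by
    have : T.submatrix e e = (Matrix.reindex e.symm e.symm) T := by
      simp [Matrix.reindex_apply]
    rw [this, Matrix.charpoly_reindex]
  rw [hchar, hchar2]
  show (Matrix.fromBlocks LM 0 0
      (Matrix.diagonal fun p : (i : Fin m) × Fin (q i - 1) => d p.1)).charpoly = _
  rw [Matrix.charpoly_fromBlocks_zero₂₁, _root_.charpoly_diagonal]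
  congr 1
  rw [← Finset.univ_sigma_univ, Finset.prod_sigma]
  apply Finset.prod_congr rfl
  intro i _
  rw [hdapp i]
  simp
/-- Lemma 7, refinement: criticality transfers from `X` (weights `qqᵀ`) to
the repeated configuration `X̃` (unit weights), and the characteristic polynomial of
`Q̃^{1/2} L(M̃) Q̃^{1/2}` is that of `L(M)` times `∏ᵢ (X − d_ii)^{q_i − 1}`. -/
theorem repeating_points_eigenvalues
    {m : ℕ} (hm : 1 ≤ m)
    (φ d1 d2 : ℝ → ℝ)
    (hder1 : ∀ t ∈ Set.Icc (-1 : ℝ) 1, HasDerivAt φ (d1 t) t)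
    (hder2 : ∀ t ∈ Set.Icc (-1 : ℝ) 1, HasDerivAt d1 (d2 t) t)
    (q : Fin m → ℕ) (hq : ∀ i, 1 ≤ q i)
    (X : Matrix (Fin 2) (Fin m) ℝ) (hX : unitCols X)
    (hcrit : IsCritical (Matrix.of fun i j => (q i : ℝ) * (q j : ℝ)) X d1) :
    IsCritical (Matrix.of fun _ _ => (1 : ℝ))
      (Matrix.of fun a (k : (i : Fin m) × Fin (q i)) => X a k.1) d1 ∧
    (Matrix.diagonal (fun k : (i : Fin m) × Fin (q i) => Real.sqrt (q k.1)) *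
        lap (Mmat (Matrix.of fun _ _ => (1 : ℝ))
          (Matrix.of fun a (k : (i : Fin m) × Fin (q i)) => X a k.1) d1 d2) *
        Matrix.diagonal (fun k : (i : Fin m) × Fin (q i) => Real.sqrt (q k.1))).charpoly
      = (lap (Mmat (Matrix.of fun i j => (q i : ℝ) * (q j : ℝ)) X d1 d2)).charpoly *
        ∏ i : Fin m,
          (Polynomial.X - Polynomial.C
            (∑ j, Mmat (Matrix.of fun i' j' => (q i' : ℝ) * (q j' : ℝ)) X d1 d2 i j))
            ^ (q i - 1) := by
  exact ⟨part1 d1 q hq X hcrit, part2 d1 d2 q hq X⟩
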